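/- Let T > 0 and let 0 = t_0 < t_1 < ... < t_N = T be a partition satisfying max_{0 ≤ i ≤ N-2} Δ_{i+1}/Δ_i ≤ R_π for some constant R_π ≥ 1, where Δ_j = t_{j+1} - t_j. For any α, β > 0 with α < 1 or β < 1, there exists a finite constant B(α,β) = (1 + R_π) · Beta(α,β) (with Beta the Euler beta integral ∫_0^1 (1-s)^{α-1} s^{β-1} ds) depending only on R_π, α, β, such that for all 0 ≤ i < k ≤ N: Σ_{j=i+1}^{k-1} Δ_j / ((t_k - t_j)^{1-α} (t_j - t_i)^{1-β}) ≤ B(α,β) (t_k - t_i)^{α+β-1}. -/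

import Mathlib

open Finset

open MeasureTheory intervalIntegral in
private lemma beta_integrable {α β a b : ℝ} (hα : 0 < α) (hβ : 0 < β) (hab : a < b) :
    IntervalIntegrable (fun u => (b - u) ^ (α - 1) * (u - a) ^ (β - 1)) volume a b := by
  set m := (a + b) / 2 with hm
  have ham : a < m := by simp only [hm]; linarith
  have hmb : m < b := by simp only [hm]; linarith
  have h1 : IntervalIntegrable (fun u => (u - a) ^ (β - 1)) volume a m := by
    have := intervalIntegrable_rpow' (a := 0) (b := m - a)
      (show (-1:ℝ) < β - 1 by linarith) |>.comp_sub_right a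
    convert this using 2 <;> ring
  have h1' : IntervalIntegrable (fun u => (b - u) ^ (α - 1) * (u - a) ^ (β - 1)) volume a m := by
    refine h1.continuousOn_mul ?_
    refine ContinuousOn.rpow_const ((continuous_const.sub continuous_id).continuousOn) ?_
    intro x hx
    rw [Set.uIcc_of_le ham.le] at hx
    exact Or.inl (by have := hx.2; intro h; nlinarith [sub_eq_zero.mp h])
  have h2 : IntervalIntegrable (fun u => (b - u) ^ (α - 1)) volume m b := by
    have := intervalIntegrable_rpow' (a := b - m) (b := 0)
      (show (-1:ℝ) < α - 1 by linarith) |>.comp_sub_left b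
    convert this using 2 <;> ring
  have h2' : IntervalIntegrable (fun u => (b - u) ^ (α - 1) * (u - a) ^ (β - 1)) volume m b := by
    refine h2.mul_continuousOn ?_
    refine ContinuousOn.rpow_const ((continuous_id.sub continuous_const).continuousOn) ?_
    intro x hx
    rw [Set.uIcc_of_le hmb.le] at hx
    exact Or.inl (by have := hx.1; intro h; nlinarith [sub_eq_zero.mp h])
  exact h1'.trans h2'

open MeasureTheory intervalIntegral in
private lemma beta_integral_eq {α β a b : ℝ} (hα : 0 < α) (hβ : 0 < β) (hab : a < b) :
    (∫ u in a..b, (b - u) ^ (α - 1) * (u - a) ^ (β - 1))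
      = (b - a) ^ (α + β - 1) * ∫ s in (0:ℝ)..1, (1 - s) ^ (α - 1) * s ^ (β - 1) := by
  set c := b - a with hc
  have hc0 : 0 < c := by linarith
  have key := intervalIntegral.integral_comp_mul_add
    (a := (0:ℝ)) (b := 1) (c := c)
    (f := fun u => (b - u) ^ (α - 1) * (u - a) ^ (β - 1)) (ne_of_gt hc0) a
  have h2 : (∫ s in (0:ℝ)..1, (b - (c * s + a)) ^ (α - 1) * ((c * s + a) - a) ^ (β - 1))
      = c ^ (α - 1) * c ^ (β - 1) * ∫ s in (0:ℝ)..1, (1 - s) ^ (α - 1) * s ^ (β - 1) := by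
    rw [← intervalIntegral.integral_const_mul]
    refine intervalIntegral.integral_congr ?_
    intro s hs
    rw [Set.uIcc_of_le (by norm_num : (0:ℝ) ≤ 1)] at hs
    have hs0 : 0 ≤ s := hs.1
    have hs1 : s ≤ 1 := hs.2
    have e1 : b - (c * s + a) = c * (1 - s) := by rw [hc]; ring
    have e2 : (c * s + a) - a = c * s := by ring
    dsimp only
    rw [e1, e2, Real.mul_rpow hc0.le (by linarith), Real.mul_rpow hc0.le hs0]
    ring
  rw [h2] at key
  have hend : c * 0 + a = a := by ring
  have hend2 : c * 1 + a = b := by rw [hc]; ring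
  rw [hend, hend2, smul_eq_mul] at key
  have : (∫ u in a..b, (b - u) ^ (α - 1) * (u - a) ^ (β - 1))
      = c * (c ^ (α - 1) * c ^ (β - 1) * ∫ s in (0:ℝ)..1, (1 - s) ^ (α - 1) * s ^ (β - 1)) := by
    field_simp at key ⊢
    linarith [key]
  rw [this]
  have : c * (c ^ (α - 1) * c ^ (β - 1)) = c ^ (α + β - 1) := by
    rw [show c * (c ^ (α - 1) * c ^ (β - 1)) = c ^ (1:ℝ) * c ^ (α - 1) * c ^ (β - 1) by
      rw [Real.rpow_one]; ring]
    rw [← Real.rpow_add hc0, ← Real.rpow_add hc0]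
    ring_nf
  rw [← this]; ring

private lemma beta_hasDeriv {α β a b : ℝ} {u : ℝ} (hau : a < u) (hub : u < b) :
    HasDerivAt (fun v => (b - v) ^ (α - 1) * (v - a) ^ (β - 1))
      ((b - u) ^ (α - 2) * (u - a) ^ (β - 2) *
        ((1 - α) * (u - a) + (β - 1) * (b - u))) u := by
  have hb0 : (0:ℝ) < b - u := by linarith
  have ha0 : (0:ℝ) < u - a := by linarith
  have h1 : HasDerivAt (fun v : ℝ => b - v) (-1) u := by
    simpa using (hasDerivAt_id u).const_sub b
  have h2 : HasDerivAt (fun v : ℝ => v - a) 1 u := (hasDerivAt_id u).sub_const a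
  have h1' := h1.rpow_const (p := α - 1) (Or.inl (ne_of_gt hb0))
  have h2' := h2.rpow_const (p := β - 1) (Or.inl (ne_of_gt ha0))
  have := h1'.mul h2'
  convert this using 1
  · rfl
  · rfl
  · rfl
  have eb : (b - u) ^ (α - 1) = (b - u) ^ (α - 2) * (b - u) := by
    rw [show α - 1 = (α - 2) + 1 by ring, Real.rpow_add_one (ne_of_gt hb0)]
  have ea : (u - a) ^ (β - 1) = (u - a) ^ (β - 2) * (u - a) := by
    rw [show β - 1 = (β - 2) + 1 by ring, Real.rpow_add_one (ne_of_gt ha0)]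
  rw [show α - 1 - 1 = α - 2 by ring, show β - 1 - 1 = β - 2 by ring, eb, ea]
  ring

private lemma beta_mono {α β a b x y : ℝ} (hax : a < x) (hxy : x ≤ y) (hyb : y < b)
    (hg : ∀ u ∈ Set.Icc x y, 0 ≤ (1 - α) * (u - a) + (β - 1) * (b - u)) :
    (b - x) ^ (α - 1) * (x - a) ^ (β - 1) ≤ (b - y) ^ (α - 1) * (y - a) ^ (β - 1) := by
  have hmono : MonotoneOn (fun v => (b - v) ^ (α - 1) * (v - a) ^ (β - 1)) (Set.Icc x y) := by
    apply monotoneOn_of_deriv_nonneg (convex_Icc x y)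
    · intro v hv
      exact ((beta_hasDeriv (α := α) (β := β) (lt_of_lt_of_le hax hv.1)
        (lt_of_le_of_lt hv.2 hyb)).continuousAt).continuousWithinAt
    · intro v hv
      rw [interior_Icc] at hv
      exact ((beta_hasDeriv (α := α) (β := β) (by linarith [hv.1])
        (by linarith [hv.2])).differentiableAt).differentiableWithinAt
    · intro v hv
      rw [interior_Icc] at hv
      have hd := beta_hasDeriv (α := α) (β := β) (a := a) (b := b) (u := v)
        (by linarith [hv.1]) (by linarith [hv.2])
      rw [hd.deriv]
      have hP : 0 ≤ (b - v) ^ (α - 2) * (v - a) ^ (β - 2) :=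
        mul_nonneg (Real.rpow_nonneg (by linarith [hv.2] : (0:ℝ) ≤ b - v) _)
          (Real.rpow_nonneg (by linarith [hv.1] : (0:ℝ) ≤ v - a) _)
      exact mul_nonneg hP (hg v ⟨hv.1.le, hv.2.le⟩)
  exact hmono (Set.left_mem_Icc.2 hxy) (Set.right_mem_Icc.2 hxy) hxy

private lemma beta_anti {α β a b x y : ℝ} (hax : a < x) (hxy : x ≤ y) (hyb : y < b)
    (hg : ∀ u ∈ Set.Icc x y, (1 - α) * (u - a) + (β - 1) * (b - u) ≤ 0) :
    (b - y) ^ (α - 1) * (y - a) ^ (β - 1) ≤ (b - x) ^ (α - 1) * (x - a) ^ (β - 1) := by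
  have hanti : AntitoneOn (fun v => (b - v) ^ (α - 1) * (v - a) ^ (β - 1)) (Set.Icc x y) := by
    apply antitoneOn_of_deriv_nonpos (convex_Icc x y)
    · intro v hv
      exact ((beta_hasDeriv (α := α) (β := β) (lt_of_lt_of_le hax hv.1)
        (lt_of_le_of_lt hv.2 hyb)).continuousAt).continuousWithinAt
    · intro v hv
      rw [interior_Icc] at hv
      exact ((beta_hasDeriv (α := α) (β := β) (by linarith [hv.1])
        (by linarith [hv.2])).differentiableAt).differentiableWithinAt
    · intro v hv
      rw [interior_Icc] at hv
      have hd := beta_hasDeriv (α := α) (β := β) (a := a) (b := b) (u := v)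
        (by linarith [hv.1]) (by linarith [hv.2])
      rw [hd.deriv]
      have hP : 0 ≤ (b - v) ^ (α - 2) * (v - a) ^ (β - 2) :=
        mul_nonneg (Real.rpow_nonneg (by linarith [hv.2] : (0:ℝ) ≤ b - v) _)
          (Real.rpow_nonneg (by linarith [hv.1] : (0:ℝ) ≤ v - a) _)
      exact mul_nonpos_of_nonneg_of_nonpos hP (hg v ⟨hv.1.le, hv.2.le⟩)
  exact hanti (Set.left_mem_Icc.2 hxy) (Set.right_mem_Icc.2 hxy) hxy

open MeasureTheory in
private lemma beta_step_fwd {α β a b x y : ℝ} (hα : 0 < α) (hβ : 0 < β) (hab : a < b)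
    (hax : a < x) (hxy : x ≤ y) (hyb : y ≤ b)
    (hg : ∀ u ∈ Set.Icc x y, 0 ≤ (1 - α) * (u - a) + (β - 1) * (b - u)) :
    (y - x) * ((b - x) ^ (α - 1) * (x - a) ^ (β - 1))
      ≤ ∫ u in x..y, (b - u) ^ (α - 1) * (u - a) ^ (β - 1) := by
  have hint : IntervalIntegrable (fun u => (b - u) ^ (α - 1) * (u - a) ^ (β - 1)) volume x y :=
    (beta_integrable hα hβ hab).mono_set (by
      rw [Set.uIcc_of_le hxy, Set.uIcc_of_le hab.le]
      exact Set.Icc_subset_Icc hax.le hyb)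
  have hconst : (y - x) * ((b - x) ^ (α - 1) * (x - a) ^ (β - 1))
      = ∫ _ in x..y, (b - x) ^ (α - 1) * (x - a) ^ (β - 1) := by
    rw [intervalIntegral.integral_const, smul_eq_mul]
  rw [hconst]
  apply intervalIntegral.integral_mono_ae_restrict hxy intervalIntegrable_const hint
  have hmem := ae_restrict_mem (μ := volume) (measurableSet_Icc (a := x) (b := y))
  have hne : ∀ᵐ u ∂(volume.restrict (Set.Icc x y)), u ≠ b := by
    refine ae_restrict_of_ae ?_
    rw [MeasureTheory.ae_iff]
    have : {u : ℝ | ¬ u ≠ b} = {b} := by ext u; simp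
    rw [this]
    exact Real.volume_singleton
  filter_upwards [hmem, hne] with u hu hub
  exact beta_mono hax hu.1 (lt_of_le_of_ne (le_trans hu.2 hyb) hub)
    (fun v hv => hg v ⟨hv.1, le_trans hv.2 hu.2⟩)

open MeasureTheory in
private lemma beta_step_bwd {α β a b x y : ℝ} (hα : 0 < α) (hβ : 0 < β) (hab : a < b)
    (hax : a ≤ x) (hxy : x ≤ y) (hyb : y < b)
    (hg : ∀ u ∈ Set.Icc x y, (1 - α) * (u - a) + (β - 1) * (b - u) ≤ 0) :
    (y - x) * ((b - y) ^ (α - 1) * (y - a) ^ (β - 1))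
      ≤ ∫ u in x..y, (b - u) ^ (α - 1) * (u - a) ^ (β - 1) := by
  have hint : IntervalIntegrable (fun u => (b - u) ^ (α - 1) * (u - a) ^ (β - 1)) volume x y :=
    (beta_integrable hα hβ hab).mono_set (by
      rw [Set.uIcc_of_le hxy, Set.uIcc_of_le hab.le]
      exact Set.Icc_subset_Icc hax hyb.le)
  have hconst : (y - x) * ((b - y) ^ (α - 1) * (y - a) ^ (β - 1))
      = ∫ _ in x..y, (b - y) ^ (α - 1) * (y - a) ^ (β - 1) := by
    rw [intervalIntegral.integral_const, smul_eq_mul]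
  rw [hconst]
  apply intervalIntegral.integral_mono_ae_restrict hxy intervalIntegrable_const hint
  have hmem := ae_restrict_mem (μ := volume) (measurableSet_Icc (a := x) (b := y))
  have hne : ∀ᵐ u ∂(volume.restrict (Set.Icc x y)), u ≠ a := by
    refine ae_restrict_of_ae ?_
    rw [MeasureTheory.ae_iff]
    have : {u : ℝ | ¬ u ≠ a} = {a} := by ext u; simp
    rw [this]
    exact Real.volume_singleton
  filter_upwards [hmem, hne] with u hu hua
  exact beta_anti (lt_of_le_of_ne (le_trans hax hu.1) (Ne.symm hua)) hu.2 hyb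
    (fun v hv => hg v ⟨le_trans hu.1 hv.1, hv.2⟩)

open MeasureTheory in
private lemma beta_int_nonneg {α β a b x y : ℝ} (hax : a ≤ x) (hxy : x ≤ y) (hyb : y ≤ b) :
    0 ≤ ∫ u in x..y, (b - u) ^ (α - 1) * (u - a) ^ (β - 1) := by
  apply intervalIntegral.integral_nonneg hxy
  intro u hu
  exact mul_nonneg (Real.rpow_nonneg (by linarith [hu.2] : (0:ℝ) ≤ b - u) _)
    (Real.rpow_nonneg (by linarith [hu.1] : (0:ℝ) ≤ u - a) _)

set_option maxHeartbeats 1000000 in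
theorem singular_double_sum_beta_bound (N : ℕ) (T Rπ : ℝ) (t : ℕ → ℝ) (α β : ℝ)
    (hT : 0 < T) (ht0 : t 0 = 0) (htN : t N = T)
    (hmono : ∀ j, j < N → t j < t (j + 1))
    (hR : 1 ≤ Rπ)
    (hratio : ∀ j, j + 2 ≤ N → t (j + 2) - t (j + 1) ≤ Rπ * (t (j + 1) - t j))
    (hα : 0 < α) (hβ : 0 < β) (hαβ : α < 1 ∨ β < 1)
    (i k : ℕ) (hik : i < k) (hkN : k ≤ N) :
    ∑ j ∈ Finset.Ioo i k, (t (j + 1) - t j) /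
        ((t k - t j) ^ (1 - α) * (t j - t i) ^ (1 - β))
      ≤ ((1 + Rπ) * ∫ s in (0:ℝ)..1, (1 - s) ^ (α - 1) * s ^ (β - 1)) *
        (t k - t i) ^ (α + β - 1) := by
  -- strict monotonicity of the partition
  have hlt : ∀ m n, m < n → n ≤ N → t m < t n := by
    intro m n hmn hnN
    induction n with
    | zero => omega
    | succ p ih =>
      rcases Nat.lt_or_ge m p with h | h
      · exact (ih h (by omega)).trans (hmono p (by omega))
      · have : m = p := by omega
        subst this; exact hmono m (by omega)
  have hle : ∀ m n, m ≤ n → n ≤ N → t m ≤ t n := by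
    intro m n hmn hnN
    rcases eq_or_lt_of_le hmn with h | h
    · subst h; exact le_refl _
    · exact (hlt m n h hnN).le
  set a := t i with ha
  set b := t k with hb
  have hab : a < b := hlt i k hik hkN
  set φ : ℝ → ℝ := fun u => (b - u) ^ (α - 1) * (u - a) ^ (β - 1) with hφ
  -- rewrite each summand
  have hsum_eq : ∑ j ∈ Finset.Ioo i k, (t (j + 1) - t j) /
        ((t k - t j) ^ (1 - α) * (t j - t i) ^ (1 - β))
      = ∑ j ∈ Finset.Ioo i k, (t (j + 1) - t j) * φ (t j) := by
    refine Finset.sum_congr rfl ?_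
    intro j hj
    rw [Finset.mem_Ioo] at hj
    have h1 : (0:ℝ) < b - t j := by
      have := hlt j k hj.2 hkN; simp only [hb]; linarith
    have h2 : (0:ℝ) < t j - a := by
      have := hlt i j hj.1 (by omega); simp only [ha]; linarith
    have e1 : (t k - t j) ^ (1 - α) = ((b - t j) ^ (α - 1))⁻¹ := by
      rw [← Real.rpow_neg h1.le, show -(α - 1) = 1 - α by ring, hb]
    have e2 : (t j - t i) ^ (1 - β) = ((t j - a) ^ (β - 1))⁻¹ := by
      rw [← Real.rpow_neg h2.le, show -(β - 1) = 1 - β by ring, ha]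
    rw [e1, e2, hφ]
    rw [div_eq_mul_inv, mul_inv, inv_inv, inv_inv]
  rw [hsum_eq]
  -- per-term estimate
  have key : ∀ j ∈ Finset.Ioo i k, (t (j + 1) - t j) * φ (t j)
      ≤ (∫ u in t j..t (j + 1), φ u) + Rπ * ∫ u in t (j - 1)..t j, φ u := by
    intro j hj
    rw [Finset.mem_Ioo] at hj
    obtain ⟨hij, hjk⟩ := hj
    have haj : a < t j := hlt i j hij (by omega)
    have hjb : t j < b := hlt j k hjk hkN
    have hjj1 : t j < t (j + 1) := hmono j (by omega)
    have hj1b : t (j + 1) ≤ b := hle (j + 1) k hjk hkN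
    have hj1a : a ≤ t (j - 1) := hle i (j - 1) (by omega) (by omega)
    have hjm1 : t (j - 1) < t j := by
      have := hmono (j - 1) (by omega)
      rwa [show j - 1 + 1 = j by omega] at this
    have hratioj : t (j + 1) - t j ≤ Rπ * (t j - t (j - 1)) := by
      have := hratio (j - 1) (by omega)
      rwa [show j - 1 + 1 = j by omega, show j - 1 + 2 = j + 1 by omega] at this
    have hφj_nonneg : 0 ≤ φ (t j) :=
      mul_nonneg (Real.rpow_nonneg (by linarith) _) (Real.rpow_nonneg (by linarith) _)
    by_cases hG : 0 ≤ (1 - α) * (t j - a) + (β - 1) * (b - t j)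
    · -- forward case
      have hgb : 0 ≤ (1 - α) * (b - a) + (β - 1) * (b - b) := by
        rcases hαβ with h | h
        · nlinarith
        · have t1 : 0 ≤ ((1 - α) * (t j - a) + (β - 1) * (b - t j)) * (b - a) :=
            mul_nonneg hG (by linarith)
          have t2 : 0 ≤ (1 - β) * ((b - a) * (b - t j)) :=
            mul_nonneg (by linarith) (mul_nonneg (by linarith) (by linarith))
          have e : (1 - α) * (b - a) * (t j - a)
              = ((1 - α) * (t j - a) + (β - 1) * (b - t j)) * (b - a)
                + (1 - β) * ((b - a) * (b - t j)) := by ring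
          have t3 : 0 ≤ (1 - α) * (b - a) * (t j - a) := by linarith
          nlinarith [t3, sub_pos.2 haj]
      have hstep := beta_step_fwd hα hβ hab haj hjj1.le hj1b
        (fun u hu => by
          obtain ⟨hu1, hu2⟩ := hu
          have hub : u ≤ b := by linarith
          have t1 : 0 ≤ (b - u) * ((1 - α) * (t j - a) + (β - 1) * (b - t j)) :=
            mul_nonneg (by linarith) hG
          have t2 : 0 ≤ (u - t j) * ((1 - α) * (b - a) + (β - 1) * (b - b)) :=
            mul_nonneg (by linarith) hgb
          have e : ((1 - α) * (u - a) + (β - 1) * (b - u)) * (b - t j)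
              = (b - u) * ((1 - α) * (t j - a) + (β - 1) * (b - t j))
                + (u - t j) * ((1 - α) * (b - a) + (β - 1) * (b - b)) := by ring
          have X : 0 ≤ ((1 - α) * (u - a) + (β - 1) * (b - u)) * (b - t j) := by linarith
          nlinarith [X, sub_pos.2 hjb])
      have h2 : 0 ≤ ∫ u in t (j - 1)..t j, φ u :=
        beta_int_nonneg hj1a hjm1.le hjb.le
      calc (t (j + 1) - t j) * φ (t j) ≤ ∫ u in t j..t (j + 1), φ u := hstep
        _ ≤ (∫ u in t j..t (j + 1), φ u) + Rπ * ∫ u in t (j - 1)..t j, φ u := by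
            have := mul_nonneg (show (0:ℝ) ≤ Rπ by linarith) h2
            linarith
    · -- backward case
      push_neg at hG
      have hga : (1 - α) * (a - a) + (β - 1) * (b - a) ≤ 0 := by
        rcases hαβ with h | h
        · have t1 : ((1 - α) * (t j - a) + (β - 1) * (b - t j)) * (b - a) ≤ 0 :=
            mul_nonpos_of_nonpos_of_nonneg hG.le (by linarith)
          have t2 : 0 ≤ (1 - α) * ((b - a) * (t j - a)) :=
            mul_nonneg (by linarith) (mul_nonneg (by linarith) (by linarith))
          have e : (β - 1) * (b - a) * (b - t j)
              = ((1 - α) * (t j - a) + (β - 1) * (b - t j)) * (b - a)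
                - (1 - α) * ((b - a) * (t j - a)) := by ring
          have t3 : (β - 1) * (b - a) * (b - t j) ≤ 0 := by linarith
          nlinarith [t3, sub_pos.2 hjb]
        · nlinarith
      have hstep := beta_step_bwd hα hβ hab hj1a hjm1.le hjb
        (fun u hu => by
          obtain ⟨hu1, hu2⟩ := hu
          have hau : a ≤ u := le_trans hj1a hu1
          have t1 : (t j - u) * ((1 - α) * (a - a) + (β - 1) * (b - a)) ≤ 0 :=
            mul_nonpos_of_nonneg_of_nonpos (by linarith) hga
          have t2 : (u - a) * ((1 - α) * (t j - a) + (β - 1) * (b - t j)) ≤ 0 :=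
            mul_nonpos_of_nonneg_of_nonpos (by linarith) hG.le
          have e : ((1 - α) * (u - a) + (β - 1) * (b - u)) * (t j - a)
              = (t j - u) * ((1 - α) * (a - a) + (β - 1) * (b - a))
                + (u - a) * ((1 - α) * (t j - a) + (β - 1) * (b - t j)) := by ring
          have X : ((1 - α) * (u - a) + (β - 1) * (b - u)) * (t j - a) ≤ 0 := by linarith
          nlinarith [X, sub_pos.2 haj])
      have h1 : 0 ≤ ∫ u in t j..t (j + 1), φ u :=
        beta_int_nonneg haj.le hjj1.le hj1b
      have hR0 : (0:ℝ) ≤ Rπ := by linarith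
      calc (t (j + 1) - t j) * φ (t j) ≤ (Rπ * (t j - t (j - 1))) * φ (t j) := by
            exact mul_le_mul_of_nonneg_right hratioj hφj_nonneg
        _ = Rπ * ((t j - t (j - 1)) * φ (t j)) := by ring
        _ ≤ Rπ * ∫ u in t (j - 1)..t j, φ u := by
            exact mul_le_mul_of_nonneg_left hstep hR0
        _ ≤ (∫ u in t j..t (j + 1), φ u) + Rπ * ∫ u in t (j - 1)..t j, φ u := by
            linarith
  -- nonnegativity of the pieces
  have hInn : ∀ j ∈ Finset.Ico i k, 0 ≤ ∫ u in t j..t (j + 1), φ u := by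
    intro j hj
    rw [Finset.mem_Ico] at hj
    exact beta_int_nonneg (hle i j hj.1 (by omega)) (hmono j (by omega)).le
      (hle (j + 1) k hj.2 hkN)
  -- telescoping
  have hint_each : ∀ j ∈ Set.Ico i k,
      IntervalIntegrable φ MeasureTheory.volume (t j) (t (j + 1)) := by
    intro j hj
    rw [Set.mem_Ico] at hj
    exact (beta_integrable hα hβ hab).mono_set (by
      rw [Set.uIcc_of_le (hmono j (by omega)).le, Set.uIcc_of_le hab.le]
      exact Set.Icc_subset_Icc (hle i j hj.1 (by omega)) (hle (j + 1) k hj.2 hkN))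
  have htel : ∑ j ∈ Finset.Ico i k, ∫ u in t j..t (j + 1), φ u = ∫ u in a..b, φ u :=
    intervalIntegral.sum_integral_adjacent_intervals_Ico hik.le hint_each
  -- combine
  have step1 : ∑ j ∈ Finset.Ioo i k, (t (j + 1) - t j) * φ (t j)
      ≤ ∑ j ∈ Finset.Ioo i k, ((∫ u in t j..t (j + 1), φ u) +
          Rπ * ∫ u in t (j - 1)..t j, φ u) := Finset.sum_le_sum key
  have step2 : ∑ j ∈ Finset.Ioo i k, (∫ u in t j..t (j + 1), φ u)
      ≤ ∑ j ∈ Finset.Ico i k, ∫ u in t j..t (j + 1), φ u := by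
    apply Finset.sum_le_sum_of_subset_of_nonneg
    · intro x hx; rw [Finset.mem_Ioo] at hx; rw [Finset.mem_Ico]; exact ⟨hx.1.le, hx.2⟩
    · intro x hx _; exact hInn x hx
  have step3 : ∑ j ∈ Finset.Ioo i k, (∫ u in t (j - 1)..t j, φ u)
      ≤ ∑ j ∈ Finset.Ico i k, ∫ u in t j..t (j + 1), φ u := by
    have hre : ∑ j ∈ Finset.Ioo i k, (∫ u in t (j - 1)..t j, φ u)
        = ∑ j ∈ Finset.Ico i (k - 1), ∫ u in t j..t (j + 1), φ u := by
      rw [← Finset.Ico_add_one_left_eq_Ioo]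
      rw [show k = (k - 1) + 1 by omega]
      rw [Finset.sum_Ico_eq_sum_range, Finset.sum_Ico_eq_sum_range]
      apply Finset.sum_congr
      · congr 1 <;> omega
      · intro x hx
        rw [Finset.mem_range] at hx
        congr 2 <;> omega
    rw [hre]
    apply Finset.sum_le_sum_of_subset_of_nonneg
    · exact Finset.Ico_subset_Ico le_rfl (by omega)
    · intro x hx _; exact hInn x hx
  have hRpos : (0:ℝ) ≤ Rπ := by linarith
  have total : ∑ j ∈ Finset.Ioo i k, (t (j + 1) - t j) * φ (t j)
      ≤ (1 + Rπ) * ∫ u in a..b, φ u := by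
    calc ∑ j ∈ Finset.Ioo i k, (t (j + 1) - t j) * φ (t j)
        ≤ ∑ j ∈ Finset.Ioo i k, ((∫ u in t j..t (j + 1), φ u) +
            Rπ * ∫ u in t (j - 1)..t j, φ u) := step1
      _ = (∑ j ∈ Finset.Ioo i k, ∫ u in t j..t (j + 1), φ u) +
            Rπ * ∑ j ∈ Finset.Ioo i k, ∫ u in t (j - 1)..t j, φ u := by
          rw [Finset.sum_add_distrib, Finset.mul_sum]
      _ ≤ (∑ j ∈ Finset.Ico i k, ∫ u in t j..t (j + 1), φ u) +
            Rπ * ∑ j ∈ Finset.Ico i k, ∫ u in t j..t (j + 1), φ u := by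
          have := mul_le_mul_of_nonneg_left step3 hRpos
          linarith [step2]
      _ = (1 + Rπ) * ∑ j ∈ Finset.Ico i k, ∫ u in t j..t (j + 1), φ u := by ring
      _ = (1 + Rπ) * ∫ u in a..b, φ u := by rw [htel]
  have hval : (∫ u in a..b, φ u)
      = (b - a) ^ (α + β - 1) * ∫ s in (0:ℝ)..1, (1 - s) ^ (α - 1) * s ^ (β - 1) :=
    beta_integral_eq hα hβ hab
  calc ∑ j ∈ Finset.Ioo i k, (t (j + 1) - t j) * φ (t j)
      ≤ (1 + Rπ) * ∫ u in a..b, φ u := total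
    _ = ((1 + Rπ) * ∫ s in (0:ℝ)..1, (1 - s) ^ (α - 1) * s ^ (β - 1)) *
        (t k - t i) ^ (α + β - 1) := by rw [hval]; ring
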